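/- Consider the war of attrition payoff matrix B = (b_{jk}), j,k = 0,…,n, with b_{jk} = v_k - c_k for j > k, b_{jk} = v_k/2 - c_k - ρ_k for j = k, and b_{jk} = -c_j for j < k, where 0 ≤ c₀ < ⋯ < cₙ, v₀ ≥ ⋯ ≥ vₙ > 0, 0 ≤ ρ_k < v_k/2. Let p be the ESS of B. If j < n and c_j ≥ cₙ + ρₙ - vₙ/2, then p_j = 0. -/
import Mathlib


open Matrix

theorem stmt_17 {n : ℕ} (c v ρ : Fin (n+1) → ℝ)
    (hc0 : 0 ≤ c 0) (hc : StrictMono c) (hv : Antitone v) (hvn : 0 < v (Fin.last n))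
    (hρ : ∀ k, 0 ≤ ρ k ∧ ρ k < v k / 2)
    (B : Matrix (Fin (n+1)) (Fin (n+1)) ℝ)
    (hB : ∀ j k, B j k =
      if (k : ℕ) < (j : ℕ) then v k - c k
      else if j = k then v k / 2 - c k - ρ k
      else - c j)
    (p : Fin (n+1) → ℝ) (hp0 : ∀ j, 0 ≤ p j) (hp1 : ∑ j, p j = 1)
    (hNash : ∀ q : Fin (n+1) → ℝ, (∀ j, 0 ≤ q j) → ∑ j, q j = 1 →
      q ⬝ᵥ B.mulVec p ≤ p ⬝ᵥ B.mulVec p)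
    (hESS : ∀ q : Fin (n+1) → ℝ, (∀ j, 0 ≤ q j) → ∑ j, q j = 1 → q ≠ p →
      q ⬝ᵥ B.mulVec p = p ⬝ᵥ B.mulVec p → q ⬝ᵥ B.mulVec q < p ⬝ᵥ B.mulVec q)
    (j : Fin (n+1)) (hj : (j : ℕ) < n)
    (hcj : c (Fin.last n) + ρ (Fin.last n) - v (Fin.last n) / 2 ≤ c j) :
    p j = 0 := by
  by_contra hpj
  have hpj' : 0 < p j := lt_of_le_of_ne (hp0 j) (Ne.symm hpj)
  set V := p ⬝ᵥ B.mulVec p with hV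
  -- every pure strategy gets payoff at most V against p
  have hA : ∀ k, B.mulVec p k ≤ V := by
    intro k
    have h1 : ∀ i, (0:ℝ) ≤ (Pi.single k 1 : Fin (n+1) → ℝ) i := by
      intro i
      by_cases h : i = k
      · subst h; simp
      · simp [Pi.single_apply, h]
    have h2 : ∑ i, (Pi.single k 1 : Fin (n+1) → ℝ) i = 1 := by simp
    have := hNash (Pi.single k 1) h1 h2
    simpa [single_dotProduct] using this
  -- strategies in the support get exactly V
  have hBj : B.mulVec p j = V := by
    by_contra hne
    have hlt : B.mulVec p j < V := lt_of_le_of_ne (hA j) hne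
    have hcontra : V < V := by
      calc V = ∑ k, p k * B.mulVec p k := by rw [hV]; simp [dotProduct]
        _ < ∑ k, p k * V := by
              apply Finset.sum_lt_sum
              · intro i _; exact mul_le_mul_of_nonneg_left (hA i) (hp0 i)
              · exact ⟨j, Finset.mem_univ j,
                  (mul_lt_mul_iff_right₀ hpj').mpr hlt⟩
        _ = V := by rw [← Finset.sum_mul, hp1, one_mul]
    exact lt_irrefl _ hcontra
  -- key pointwise facts
  have hlastval : ((Fin.last n : Fin (n+1)) : ℕ) = n := Fin.val_last n
  have hvj : 0 < v j := lt_of_lt_of_le hvn (hv (Fin.le_last j))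
  have hρn := hρ (Fin.last n)
  have hg : ∀ k, 0 ≤ (B (Fin.last n) k - B j k) * p k := by
    intro k
    apply mul_nonneg _ (hp0 k)
    rcases lt_trichotomy ((k:ℕ)) ((j:ℕ)) with hkj | hkj | hkj
    · have hkn : (k:ℕ) < ((Fin.last n : Fin (n+1)) : ℕ) := by
        rw [hlastval]; omega
      rw [hB, hB, if_pos hkn, if_pos hkj]
      simp
    · -- k = j
      have hkj' : k = j := Fin.ext hkj
      subst hkj'
      have hkn : (k:ℕ) < ((Fin.last n : Fin (n+1)) : ℕ) := by
        rw [hlastval]; omega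
      rw [hB, hB, if_pos hkn, if_neg (lt_irrefl (k:ℕ)), if_pos rfl]
      have := (hρ k).1
      nlinarith
    · -- j < k
      by_cases hkn : (k:ℕ) < n
      · -- j < k < n
        have hkn' : (k:ℕ) < ((Fin.last n : Fin (n+1)) : ℕ) := by
          rw [hlastval]; omega
        have hjk : ¬ ((k:ℕ) < (j:ℕ)) := by omega
        have hne : j ≠ k := fun h => by subst h; omega
        rw [hB, hB, if_pos hkn', if_neg hjk, if_neg hne]
        have hvk : v (Fin.last n) ≤ v k := hv (Fin.le_last k)
        have hck : c k < c (Fin.last n) := hc (by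
          rw [Fin.lt_def, hlastval]; exact hkn)
        nlinarith [hρn.1, hρn.2]
      · -- k = last
        have hkl : k = Fin.last n := Fin.ext (by
          have := Fin.is_le k; rw [hlastval]; omega)
        subst hkl
        have hjk : ¬ (((Fin.last n : Fin (n+1)) : ℕ) < (j:ℕ)) := by
          rw [hlastval]; omega
        have hne : j ≠ Fin.last n := fun h => by
          rw [h, hlastval] at hj; omega
        rw [hB, hB, if_neg (lt_irrefl ((Fin.last n : Fin (n+1)) : ℕ)),
          if_pos rfl, if_neg hjk, if_neg hne]
        linarith
  have hgj : 0 < (B (Fin.last n) j - B j j) * p j := by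
    apply mul_pos _ hpj'
    have hjn : (j:ℕ) < ((Fin.last n : Fin (n+1)) : ℕ) := by
      rw [hlastval]; omega
    rw [hB, hB, if_pos hjn, if_neg (lt_irrefl (j:ℕ)), if_pos rfl]
    have := (hρ j).1
    nlinarith
  have hdiff : 0 < ∑ k, (B (Fin.last n) k - B j k) * p k :=
    Finset.sum_pos' (fun k _ => hg k) ⟨j, Finset.mem_univ j, hgj⟩
  have heq : B.mulVec p (Fin.last n) - B.mulVec p j
      = ∑ k, (B (Fin.last n) k - B j k) * p k := by
    simp [mulVec, dotProduct, sub_mul, Finset.sum_sub_distrib]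
  have hlt : B.mulVec p j < B.mulVec p (Fin.last n) := by linarith
  have := hA (Fin.last n)
  linarith [hBj]
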